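/- Consider the natural action of the Baumslag–Solitar group BS(1,k) = ℤ[1/k] ⋊ ℤ on X = Π_ℤ ℤ/kℤ with the product of uniform measures μ (ℤ[1/k] acting by k-adic odometer-type additions and ℤ by shift), and let S = {δ₀, 1_ℤ} be the standard generating set of ℤ/kℤ ≀ ℤ acting on X with the same orbits. Then for every g ∈ BS(1,k) with word length |g|_T (T = {1_{ℤ[1/k]}, 1_ℤ}) and every M ≥ 0, μ({x ∈ X : d_{S^±}(g·x, x) ≥ (k+1)(2|g|_T + 2M + 3)}) ≤ k^{−M+1}, where d_{S^±}(x,y) is the word-length of the unique lamplighter element carrying x to y. -/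

import Mathlib

open MeasureTheory

attribute [local instance] Classical.propDecidable

noncomputable section

/-- The shift `(0,1) ∈ BS(1,k)` (and of the lamplighter) on `X = Π_ℤ ℤ/kℤ`. -/
def shiftMap (k : ℕ) (x : ℤ → ZMod k) : ℤ → ZMod k := fun i => x (i - 1)

/-- Inverse shift. -/
def shiftInvMap (k : ℕ) (x : ℤ → ZMod k) : ℤ → ZMod k := fun i => x (i + 1)

/-- The lamplighter generator `δ₀`: increment the lamp at position `0`. -/
def lampMap (k : ℕ) (x : ℤ → ZMod k) : ℤ → ZMod k := Function.update x 0 (x 0 + 1)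

/-- Inverse of `lampMap`. -/
def lampInvMap (k : ℕ) (x : ℤ → ZMod k) : ℤ → ZMod k := Function.update x 0 (x 0 - 1)

/-- The `k`-adic odometer: the action of `1 ∈ ℤ[1/k] ≤ BS(1,k)`, adding `1` at position
`0` with carries to the right. -/
def odoMap (k : ℕ) (x : ℤ → ZMod k) : ℤ → ZMod k :=
  if h : ∃ j : ℕ, x j ≠ -1 then
    fun i => if i = (Nat.find h : ℤ) then x i + 1
      else if 0 ≤ i ∧ i < (Nat.find h : ℤ) then 0 else x i
  else fun i => if 0 ≤ i then 0 else x i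

/-- The inverse odometer: the action of `-1 ∈ ℤ[1/k]`. -/
def odoInvMap (k : ℕ) (x : ℤ → ZMod k) : ℤ → ZMod k :=
  if h : ∃ j : ℕ, x j ≠ 0 then
    fun i => if i = (Nat.find h : ℤ) then x i - 1
      else if 0 ≤ i ∧ i < (Nat.find h : ℤ) then -1 else x i
  else fun i => if 0 ≤ i then -1 else x i

/-- The four generators `T^± = {a^{±1}, t^{±1}}` of `BS(1,k)` acting on `X`. -/
def bsGens (k : ℕ) : Set ((ℤ → ZMod k) → ℤ → ZMod k) :=
  {odoMap k, odoInvMap k, shiftMap k, shiftInvMap k}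

/-- The four generators `S^± = {δ₀^{±1}, t^{±1}}` of the lamplighter `ℤ/kℤ ≀ ℤ`
acting on `X`. -/
def lampGens (k : ℕ) : Set ((ℤ → ZMod k) → ℤ → ZMod k) :=
  {lampMap k, lampInvMap k, shiftMap k, shiftInvMap k}

/-- `d_{S^±}(x,y)`: the word length of the (a.e. unique) lamplighter element carrying
`x` to `y`, i.e. the Schreier distance of `x, y` with respect to the lamplighter
generators. -/
def lampDist (k : ℕ) (x y : ℤ → ZMod k) : ℕ :=
  sInf {n : ℕ | ∃ l : List ((ℤ → ZMod k) → ℤ → ZMod k),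
    l.length = n ∧ (∀ f ∈ l, f ∈ lampGens k) ∧ l.foldr (fun f z => f z) x = y}

namespace BSAux

/-- floor-division digit shifting helper -/
lemma ediv_shift {c d r A : ℤ} (hc : 0 < c) (hd : 0 < d) (hr0 : 0 ≤ r) (hrc : r < c) :
    (r + c * A) / (c * d) = A / d := by
  have h1 : 0 < c * d := mul_pos hc hd
  have hA : A = d * (A / d) + A % d := (Int.mul_ediv_add_emod A d).symm
  have key : (c * (A % d) + r) + (c * d) * (A / d) = r + c * A := by ring_nf; nlinarith [Int.mul_ediv_add_emod A d]
  have h0 : 0 ≤ c * (A % d) + r := by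
    have := Int.emod_nonneg A (by omega : d ≠ 0); positivity
  have h2 : c * (A % d) + r < c * d := by
    have := Int.emod_lt_of_pos A hd
    nlinarith
  exact ((Int.ediv_emod_unique h1).mpr ⟨key, h0, h2⟩).1

variable {k : ℕ}

/-- `Σ_{j<i} val (x j) * k^j`. -/
def digSum (k : ℕ) (x : ℕ → ZMod k) : ℕ → ℤ
  | 0 => 0
  | i + 1 => digSum k x i + ((x i).val : ℤ) * (k : ℤ) ^ i

lemma digSum_succ (x : ℕ → ZMod k) (i : ℕ) :
    digSum k x (i + 1) = digSum k x i + ((x i).val : ℤ) * (k : ℤ) ^ i := rfl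

lemma digSum_nonneg (x : ℕ → ZMod k) (i : ℕ) : 0 ≤ digSum k x i := by
  induction i with
  | zero => simp [digSum]
  | succ i ih => rw [digSum_succ]; positivity

lemma val_le [NeZero k] (a : ZMod k) : ((a.val : ℤ)) ≤ (k : ℤ) - 1 := by
  have := ZMod.val_lt a
  omega

lemma digSum_lt [NeZero k] (x : ℕ → ZMod k) (i : ℕ) : digSum k x i ≤ (k : ℤ) ^ i - 1 := by
  have hk0 : 0 < k := Nat.pos_of_ne_zero (NeZero.ne k)
  induction i with
  | zero => simp [digSum]
  | succ i ih =>
    rw [digSum_succ]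
    have hv : ((x i).val : ℤ) ≤ (k : ℤ) - 1 := val_le _
    have hki : (0:ℤ) < (k:ℤ) ^ i := by positivity
    calc digSum k x i + ((x i).val : ℤ) * (k : ℤ) ^ i
        ≤ ((k:ℤ)^i - 1) + ((k:ℤ) - 1) * (k:ℤ)^i := by
          gcongr
      _ = (k:ℤ)^(i+1) - 1 := by ring

/-- refined upper bound: a digit `≤ k-2` at place `q < i` gains `k^q`. -/
lemma digSum_lt' [NeZero k] (x : ℕ → ZMod k) {q i : ℕ} (hq : q < i)
    (hxq : ((x q).val : ℤ) ≤ (k : ℤ) - 2) :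
    digSum k x i ≤ (k : ℤ) ^ i - 1 - (k : ℤ) ^ q := by
  have hk0 : 0 < k := Nat.pos_of_ne_zero (NeZero.ne k)
  induction i with
  | zero => omega
  | succ i ih =>
    rw [digSum_succ]
    have hki : (0:ℤ) < (k:ℤ) ^ i := by positivity
    have hps : (k:ℤ)^(i+1) = (k:ℤ) * (k:ℤ)^i := by ring
    rcases Nat.lt_succ_iff_lt_or_eq.mp hq with h | rfl
    · have := ih h
      have hv : ((x i).val : ℤ) ≤ (k : ℤ) - 1 := val_le _
      nlinarith [mul_le_mul_of_nonneg_right hv (le_of_lt hki)]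
    · have := digSum_lt (k := k) x q
      nlinarith [mul_le_mul_of_nonneg_right hxq (le_of_lt hki)]

/-- refined lower bound: a digit `≥ 1` at place `q < i` gives `k^q ≤`. -/
lemma digSum_ge [NeZero k] (x : ℕ → ZMod k) {q i : ℕ} (hq : q < i)
    (hxq : (1 : ℤ) ≤ ((x q).val : ℤ)) :
    (k : ℤ) ^ q ≤ digSum k x i := by
  have hk0 : 0 < k := Nat.pos_of_ne_zero (NeZero.ne k)
  induction i with
  | zero => omega
  | succ i ih =>
    rw [digSum_succ]
    have hki : (0:ℤ) < (k:ℤ) ^ i := by positivity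
    have h0 := digSum_nonneg x i
    rcases Nat.lt_succ_iff_lt_or_eq.mp hq with h | rfl
    · have := ih h
      nlinarith [mul_nonneg (Nat.cast_nonneg (α := ℤ) (x i).val) (le_of_lt hki)]
    · nlinarith

/-- Digits of `a + x` in `k`-adic arithmetic. -/
def addInt (k : ℕ) (a : ℤ) (x : ℕ → ZMod k) (i : ℕ) : ZMod k :=
  (((a + digSum k x (i + 1)) / (k : ℤ) ^ i : ℤ) : ZMod k)

lemma addInt_zero [NeZero k] (x : ℕ → ZMod k) : addInt k 0 x = x := by
  funext i
  have hk0 : 0 < k := Nat.pos_of_ne_zero (NeZero.ne k)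
  have hki : (0:ℤ) < (k:ℤ) ^ i := by positivity
  unfold addInt
  rw [digSum_succ, zero_add]
  have h1 : digSum k x i + ((x i).val : ℤ) * (k:ℤ)^i = digSum k x i + (k:ℤ)^i * ((x i).val : ℤ) := by ring
  rw [h1, Int.add_mul_ediv_left _ _ (by positivity : ((k:ℤ)^i) ≠ 0),
    Int.ediv_eq_zero_of_lt (digSum_nonneg x i) (by have := digSum_lt (k:=k) x i; omega)]
  push_cast
  rw [zero_add]; exact ZMod.natCast_rightInverse (x i)

lemma emod_mul_split {m c d : ℤ} (hc : 0 < c) (hd : 0 < d) :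
    m % (c * d) = m % c + ((m / c) % d) * c := by
  have h1 : 0 < c * d := mul_pos hc hd
  have key : (m % c + ((m / c) % d) * c) + (c * d) * ((m / c) / d) = m := by
    have e1 : c * ((m / c) % d + d * ((m / c) / d)) = c * (m / c) := by
      rw [Int.emod_add_mul_ediv]
    have e2 : m % c + c * (m / c) = m := Int.emod_add_mul_ediv m c
    nlinarith [e1, e2]
  have h0 : 0 ≤ m % c + ((m / c) % d) * c := by
    have := Int.emod_nonneg m (by omega : c ≠ 0)
    have := Int.emod_nonneg (m / c) (by omega : d ≠ 0)
    positivity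
  have h2 : m % c + ((m / c) % d) * c < c * d := by
    have := Int.emod_lt_of_pos m hc
    have := Int.emod_lt_of_pos (m / c) hd
    nlinarith
  exact ((Int.ediv_emod_unique h1).mpr ⟨key, h0, h2⟩).2

lemma digSum_addInt [NeZero k] (b : ℤ) (x : ℕ → ZMod k) (i : ℕ) :
    digSum k (addInt k b x) i = (b + digSum k x i) % ((k : ℤ) ^ i) := by
  have hk0 : 0 < k := Nat.pos_of_ne_zero (NeZero.ne k)
  have hkz : (0:ℤ) < (k:ℤ) := by exact_mod_cast hk0
  induction i with
  | zero => simp [digSum]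
  | succ i ih =>
    have hki : (0:ℤ) < (k:ℤ) ^ i := by positivity
    rw [digSum_succ, ih]
    have hval : (((addInt k b x i).val : ℤ)) = ((b + digSum k x (i+1)) / (k:ℤ)^i) % k := by
      unfold addInt
      rw [ZMod.val_intCast]
    rw [hval]
    have hN : (b + digSum k x i) % (k:ℤ)^i = (b + digSum k x (i+1)) % (k:ℤ)^i := by
      rw [digSum_succ]
      have : b + (digSum k x i + ((x i).val : ℤ) * (k:ℤ)^i)
          = (b + digSum k x i) + (k:ℤ)^i * ((x i).val : ℤ) := by ring
      rw [this, Int.add_mul_emod_self_left]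
    rw [hN]
    have := emod_mul_split (m := b + digSum k x (i+1)) (c := (k:ℤ)^i) (d := (k:ℤ)) hki hkz
    rw [pow_succ]
    omega

lemma addInt_addInt [NeZero k] (a b : ℤ) (x : ℕ → ZMod k) :
    addInt k a (addInt k b x) = addInt k (a + b) x := by
  have hk0 : 0 < k := Nat.pos_of_ne_zero (NeZero.ne k)
  funext i
  have hki : ((k:ℤ) ^ i) ≠ 0 := by positivity
  have key : digSum k (addInt k b x) (i+1) = (b + digSum k x (i+1)) % ((k:ℤ)^(i+1)) :=
    digSum_addInt b x (i+1)
  unfold addInt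
  rw [show digSum k (fun i => (((b + digSum k x (i + 1)) / (k:ℤ) ^ i : ℤ) : ZMod k)) (i+1)
      = (b + digSum k x (i+1)) % ((k:ℤ)^(i+1)) from key]
  set m := b + digSum k x (i+1) with hm
  have : a + m % (k:ℤ)^(i+1) = (a + m) + (k:ℤ)^i * ((k:ℤ) * (-(m / (k:ℤ)^(i+1)))) := by
    have h := Int.emod_add_mul_ediv m ((k:ℤ)^(i+1))
    have hp : (k:ℤ)^i * ((k:ℤ) * (-(m / (k:ℤ)^(i+1)))) = -((k:ℤ)^(i+1) * (m / (k:ℤ)^(i+1))) := by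
      ring
    rw [hp]; linarith
  rw [this, Int.add_mul_ediv_left _ _ hki]
  push_cast
  rw [ZMod.natCast_self, hm]
  ring

lemma digSum_shift [NeZero k] (x : ℕ → ZMod k) (i : ℕ) :
    digSum k x (i + 1) = ((x 0).val : ℤ) + (k : ℤ) * digSum k (fun j => x (j + 1)) i := by
  induction i with
  | zero => simp [digSum]
  | succ i ih =>
    rw [digSum_succ, ih, digSum_succ]
    ring

lemma addInt_mul_zero [NeZero k] (b : ℤ) (x : ℕ → ZMod k) :
    addInt k ((k:ℤ) * b) x 0 = x 0 := by
  unfold addInt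
  have : digSum k x 1 = ((x 0).val : ℤ) := by simp [digSum]
  rw [this]
  simp only [pow_zero, Int.ediv_one]
  push_cast
  rw [ZMod.natCast_self]
  simpa using ZMod.natCast_rightInverse (x 0)

lemma addInt_mul_succ [NeZero k] (b : ℤ) (x : ℕ → ZMod k) (i : ℕ) :
    addInt k ((k:ℤ) * b) x (i + 1) = addInt k b (fun j => x (j + 1)) i := by
  have hk0 : 0 < k := Nat.pos_of_ne_zero (NeZero.ne k)
  have hkz : (0:ℤ) < (k:ℤ) := by exact_mod_cast hk0
  have hki : (0:ℤ) < (k:ℤ) ^ i := by positivity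
  unfold addInt
  rw [digSum_shift]
  have e1 : (k:ℤ) * b + (((x 0).val : ℤ) + (k:ℤ) * digSum k (fun j => x (j+1)) (i+1))
      = ((x 0).val : ℤ) + (k:ℤ) * (b + digSum k (fun j => x (j+1)) (i+1)) := by ring
  have e2 : ((k:ℤ))^(i+1) = (k:ℤ) * (k:ℤ)^i := by ring
  rw [e1, e2, ediv_shift hkz hki (by positivity) (by exact_mod_cast ZMod.val_lt (x 0))]

lemma ne_neg_one_val [NeZero k] (hk : 2 ≤ k) {a : ZMod k} (ha : a ≠ -1) :
    ((a.val : ℤ)) ≤ (k : ℤ) - 2 := by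
  have hlt := ZMod.val_lt a
  by_contra h
  have : a.val = k - 1 := by omega
  apply ha
  calc a = ((a.val : ℕ) : ZMod k) := (ZMod.natCast_rightInverse a).symm
    _ = ((k - 1 : ℕ) : ZMod k) := by rw [this]
    _ = ((k : ℕ) : ZMod k) - 1 := by
        rw [Nat.cast_sub (show 1 ≤ k by omega)]; norm_num
    _ = -1 := by rw [ZMod.natCast_self]; ring

lemma ne_zero_val [NeZero k] {a : ZMod k} (ha : a ≠ 0) : (1:ℤ) ≤ ((a.val : ℤ)) := by
  have : a.val ≠ 0 := fun h => ha (by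
    have := ZMod.natCast_rightInverse a
    rw [← this, h]; simp)
  omega

lemma pow_le_pow_k (hk : 2 ≤ k) {s t : ℕ} (h : s ≤ t) : ((k:ℤ))^s ≤ ((k:ℤ))^t :=
  pow_le_pow_right₀ (by exact_mod_cast (by omega : 1 ≤ k)) h

/-- Key localization: if `|b| ≤ k^t` and there are digits `≠ -1` and `≠ 0` in `[t, T)`,
then `addInt b x` agrees with `x` from `T` on. -/
lemma addInt_high (hk : 2 ≤ k) [NeZero k] (x : ℕ → ZMod k) {b : ℤ} {t T : ℕ}
    (hb1 : -((k:ℤ)^t) ≤ b) (hb2 : b ≤ (k:ℤ)^t)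
    (q1 q2 : ℕ) (hq1 : t ≤ q1) (hq1T : q1 < T) (hx1 : x q1 ≠ -1)
    (hq2 : t ≤ q2) (hq2T : q2 < T) (hx2 : x q2 ≠ 0) :
    ∀ i, T ≤ i → addInt k b x i = x i := by
  have hk0 : 0 < k := by omega
  intro i hi
  have hki : (0:ℤ) < (k:ℤ) ^ i := by positivity
  have key : 0 ≤ b + digSum k x i ∧ b + digSum k x i < (k:ℤ)^i := by
    rcases le_or_gt 0 b with hb | hb
    · constructor
      · have := digSum_nonneg x i; omega
      · have h1 := digSum_lt' (k := k) x (lt_of_lt_of_le hq1T hi) (ne_neg_one_val hk hx1)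
        have h2 : (k:ℤ)^t ≤ (k:ℤ)^q1 := pow_le_pow_k hk hq1
        omega
    · constructor
      · have h1 := digSum_ge (k := k) x (lt_of_lt_of_le hq2T hi) (ne_zero_val hx2)
        have h2 : (k:ℤ)^t ≤ (k:ℤ)^q2 := pow_le_pow_k hk hq2
        omega
      · have := digSum_lt (k := k) x i; omega
  unfold addInt
  rw [digSum_succ]
  have e1 : b + (digSum k x i + ((x i).val : ℤ) * (k:ℤ)^i)
      = (b + digSum k x i) + (k:ℤ)^i * ((x i).val : ℤ) := by ring
  rw [e1, Int.add_mul_ediv_left _ _ (by positivity : ((k:ℤ)^i) ≠ 0),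
    Int.ediv_eq_zero_of_lt key.1 key.2]
  push_cast
  rw [zero_add]
  exact ZMod.natCast_rightInverse (x i)


def sig (k : ℕ) (m : ℤ) (x : ℤ → ZMod k) : ℤ → ZMod k := fun t => x (t - m)

lemma sig_sig (a b : ℤ) (x : ℤ → ZMod k) : sig k a (sig k b x) = sig k (a + b) x := by
  funext t; simp only [sig]; congr 1; ring

lemma sig_zero (x : ℤ → ZMod k) : sig k 0 x = x := by
  funext t; simp [sig]

lemma shiftMap_eq_sig (x : ℤ → ZMod k) : shiftMap k x = sig k 1 x := rfl

lemma shiftInvMap_eq_sig (x : ℤ → ZMod k) : shiftInvMap k x = sig k (-1) x := by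
  funext t; simp [sig, shiftInvMap, sub_neg_eq_add]

/-- add the integer `b` k-adically, with lowest digit at position `β`. -/
def addAt (k : ℕ) (b β : ℤ) (x : ℤ → ZMod k) : ℤ → ZMod k :=
  fun t => if β ≤ t then addInt k b (fun j => x (β + j)) (t - β).toNat else x t

lemma addAt_zero [NeZero k] (β : ℤ) (x : ℤ → ZMod k) : addAt k 0 β x = x := by
  funext t
  unfold addAt
  split_ifs with h
  · rw [addInt_zero]
    congr 1
    omega
  · rfl

lemma addAt_add [NeZero k] (a b β : ℤ) (x : ℤ → ZMod k) :
    addAt k a β (addAt k b β x) = addAt k (a + b) β x := by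
  funext t
  unfold addAt
  split_ifs with h
  · have e : (fun j : ℕ => if β ≤ β + (j:ℤ) then
        addInt k b (fun j' => x (β + j')) ((β + (j:ℤ) - β).toNat) else x (β + j))
        = addInt k b (fun j' => x (β + j')) := by
      funext j
      rw [if_pos (by omega : β ≤ β + (j:ℤ))]
      congr 1
      omega
    rw [e, addInt_addInt]
  · rfl

lemma addAt_rebase [NeZero k] (b β : ℤ) (x : ℤ → ZMod k) :
    addAt k b β x = addAt k ((k:ℤ) * b) (β - 1) x := by
  funext t
  unfold addAt
  rcases lt_trichotomy t (β - 1) with h | h | h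
  · rw [if_neg (by omega), if_neg (by omega)]
  · subst h
    rw [if_neg (by omega), if_pos (by omega)]
    have : (β - 1 - (β - 1)).toNat = 0 := by omega
    rw [this, addInt_mul_zero]
    congr 1
    omega
  · rw [if_pos (by omega), if_pos (by omega)]
    have e1 : (t - (β - 1)).toNat = (t - β).toNat + 1 := by omega
    rw [e1, addInt_mul_succ]
    congr 1
    funext j
    congr 1
    omega

lemma addAt_rebase_pow [NeZero k] (b β : ℤ) (x : ℤ → ZMod k) (s : ℕ) :
    addAt k b β x = addAt k ((k:ℤ)^s * b) (β - s) x := by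
  induction s with
  | zero => simp
  | succ s ih =>
    have e : (k:ℤ)^(s+1) * b = (k:ℤ) * ((k:ℤ)^s * b) := by ring
    have e2 : (β - ((s+1:ℕ):ℤ)) = (β - (s:ℤ)) - 1 := by push_cast; ring
    rw [e2, e, ih, addAt_rebase]

lemma addAt_sig [NeZero k] (b β m : ℤ) (x : ℤ → ZMod k) :
    addAt k b β (sig k m x) = sig k m (addAt k b (β - m) x) := by
  funext t
  simp only [addAt, sig]
  rcases le_or_gt β t with h | h
  · rw [if_pos h, if_pos (by omega)]
    have e : (fun j : ℕ => x (β + (j:ℤ) - m)) = (fun j : ℕ => x ((β - m) + (j:ℤ))) := by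
      funext j; congr 1; ring
    rw [e]
    congr 1
    omega
  · rw [if_neg (by omega), if_neg (by omega)]

lemma addInt_formula [NeZero k] (a : ℤ) (x : ℕ → ZMod k) (i : ℕ) :
    addInt k a x i = (((a + digSum k x i) / (k:ℤ)^i : ℤ) : ZMod k) + x i := by
  unfold addInt
  rw [digSum_succ]
  have e1 : a + (digSum k x i + ((x i).val : ℤ) * (k:ℤ)^i)
      = (a + digSum k x i) + (k:ℤ)^i * ((x i).val : ℤ) := by ring
  have hk0 : 0 < k := Nat.pos_of_ne_zero (NeZero.ne k)
  rw [e1, Int.add_mul_ediv_left _ _ (by positivity : ((k:ℤ)^i) ≠ 0)]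
  push_cast
  rw [ZMod.natCast_rightInverse (x i)]

lemma val_neg_one' (hk : 2 ≤ k) [NeZero k] : (((-1 : ZMod k)).val : ℤ) = (k:ℤ) - 1 := by
  have h1 : (-1 : ZMod k) = ((k - 1 : ℕ) : ZMod k) := by
    rw [Nat.cast_sub (by omega : 1 ≤ k), ZMod.natCast_self]
    push_cast
    ring
  rw [h1, ZMod.val_cast_of_lt (by omega)]
  omega

lemma digSum_all_neg_one (hk : 2 ≤ k) [NeZero k] {y : ℕ → ZMod k} {i : ℕ}
    (h : ∀ j, j < i → y j = -1) : digSum k y i = (k:ℤ)^i - 1 := by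
  induction i with
  | zero => simp [digSum]
  | succ i ih =>
    rw [digSum_succ, ih (fun j hj => h j (by omega)), h i (by omega), val_neg_one' hk]
    ring

lemma digSum_all_zero [NeZero k] {y : ℕ → ZMod k} {i : ℕ}
    (h : ∀ j, j < i → y j = 0) : digSum k y i = 0 := by
  induction i with
  | zero => simp [digSum]
  | succ i ih =>
    rw [digSum_succ, ih (fun j hj => h j (by omega)), h i (by omega)]
    simp

lemma odoMap_eq_addAt (hk : 2 ≤ k) [NeZero k] (x : ℤ → ZMod k) :
    odoMap k x = addAt k 1 0 x := by
  have hk0 : 0 < k := by omega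
  funext t
  unfold odoMap addAt
  have hyx : (fun j : ℕ => x (0 + (j:ℤ))) = (fun j : ℕ => x (j:ℤ)) := by
    funext j; congr 1; omega
  by_cases h : ∃ j : ℕ, x (j:ℤ) ≠ -1
  · rw [dif_pos h]
    set j₀ := Nat.find h with hj₀
    have hbelow : ∀ j : ℕ, j < j₀ → x (j:ℤ) = -1 := by
      intro j hj
      have := Nat.find_min h hj
      simpa using this
    have hat : x (j₀:ℤ) ≠ -1 := Nat.find_spec h
    rcases lt_trichotomy t (j₀:ℤ) with ht | ht | ht
    · rcases le_or_gt 0 t with ht0 | ht0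
      · rw [if_neg (by omega), if_pos ⟨ht0, ht⟩, if_pos ht0, hyx]
        rw [addInt_formula]
        have hd : digSum k (fun j : ℕ => x (j:ℤ)) ((t - 0).toNat)
            = (k:ℤ)^((t - 0).toNat) - 1 := by
          apply digSum_all_neg_one hk
          intro j hj
          exact hbelow j (by omega)
        rw [hd]
        have e : (1 : ℤ) + ((k:ℤ)^((t-0).toNat) - 1) = (k:ℤ)^((t-0).toNat) := by ring
        rw [e, Int.ediv_self (by positivity)]
        have hxt : x (((t - 0).toNat : ℕ) : ℤ) = -1 := hbelow (t - 0).toNat (by omega)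
        rw [hxt]
        simp
      · rw [if_neg (by omega), if_neg (by omega), if_neg (by omega)]
    · rw [if_pos ht, if_pos (by omega), hyx]
      rw [addInt_formula]
      have ht0 : (0:ℤ) ≤ t := by omega
      have htn : (t - 0).toNat = j₀ := by omega
      rw [htn]
      have hd : digSum k (fun j : ℕ => x (j:ℤ)) j₀ = (k:ℤ)^j₀ - 1 :=
        digSum_all_neg_one hk hbelow
      rw [hd]
      have e : (1 : ℤ) + ((k:ℤ)^j₀ - 1) = (k:ℤ)^j₀ := by ring
      rw [e, Int.ediv_self (by positivity)]
      rw [ht]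
      push_cast
      ring
    · rcases le_or_gt 0 t with ht0 | ht0
      swap
      · omega
      rw [if_neg (by omega), if_neg (by omega), if_pos ht0, hyx]
      rw [addInt_formula]
      set i := (t - 0).toNat with hi
      have hij : j₀ < i := by omega
      have hub := digSum_lt' (k := k) (fun j : ℕ => x (j:ℤ)) hij (ne_neg_one_val hk hat)
      have hlb := digSum_nonneg (fun j : ℕ => x (j:ℤ)) i
      have hkj : (1:ℤ) ≤ (k:ℤ)^j₀ := one_le_pow₀ (by exact_mod_cast (by omega : 1 ≤ k))
      rw [Int.ediv_eq_zero_of_lt (by omega) (by omega)]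
      have e2 : ((i : ℕ) : ℤ) = t := by omega
      rw [e2]
      simp
  · rw [dif_neg h]
    push_neg at h
    rcases le_or_gt 0 t with ht0 | ht0
    · rw [if_pos ht0, if_pos ht0, hyx]
      rw [addInt_formula]
      set i := (t - 0).toNat with hi
      have hd : digSum k (fun j : ℕ => x (j:ℤ)) i = (k:ℤ)^i - 1 :=
        digSum_all_neg_one hk (fun j _ => h j)
      rw [hd]
      have e : (1 : ℤ) + ((k:ℤ)^i - 1) = (k:ℤ)^i := by ring
      rw [e, Int.ediv_self (by positivity), h i]
      simp
    · rw [if_neg (by omega), if_neg (by omega)]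

lemma neg_one_ediv_pos {d : ℤ} (hd : 0 < d) : (-1 : ℤ) / d = -1 :=
  ((Int.ediv_emod_unique (r := d - 1) (q := -1) hd).mpr ⟨by ring, by omega, by omega⟩).1

lemma odoInvMap_eq_addAt (hk : 2 ≤ k) [NeZero k] (x : ℤ → ZMod k) :
    odoInvMap k x = addAt k (-1) 0 x := by
  have hk0 : 0 < k := by omega
  funext t
  unfold odoInvMap addAt
  have hyx : (fun j : ℕ => x (0 + (j:ℤ))) = (fun j : ℕ => x (j:ℤ)) := by
    funext j; congr 1; omega
  by_cases h : ∃ j : ℕ, x (j:ℤ) ≠ 0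
  · rw [dif_pos h]
    set j₀ := Nat.find h with hj₀
    have hbelow : ∀ j : ℕ, j < j₀ → x (j:ℤ) = 0 := by
      intro j hj
      have := Nat.find_min h hj
      simpa using this
    have hat : x (j₀:ℤ) ≠ 0 := Nat.find_spec h
    rcases lt_trichotomy t (j₀:ℤ) with ht | ht | ht
    · rcases le_or_gt 0 t with ht0 | ht0
      · rw [if_neg (by omega), if_pos ⟨ht0, ht⟩, if_pos ht0, hyx]
        rw [addInt_formula]
        have hd : digSum k (fun j : ℕ => x (j:ℤ)) ((t - 0).toNat) = 0 := by
          apply digSum_all_zero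
          intro j hj
          exact hbelow j (by omega)
        rw [hd, add_zero, neg_one_ediv_pos (by positivity)]
        have hxt : x (((t - 0).toNat : ℕ) : ℤ) = 0 := hbelow (t - 0).toNat (by omega)
        rw [hxt]
        simp
      · rw [if_neg (by omega), if_neg (by omega), if_neg (by omega)]
    · rw [if_pos ht, if_pos (by omega), hyx]
      rw [addInt_formula]
      have htn : (t - 0).toNat = j₀ := by omega
      rw [htn]
      have hd : digSum k (fun j : ℕ => x (j:ℤ)) j₀ = 0 := digSum_all_zero hbelow
      rw [hd, add_zero, neg_one_ediv_pos (by positivity), ht]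
      push_cast
      ring
    · rcases le_or_gt 0 t with ht0 | ht0
      swap
      · omega
      rw [if_neg (by omega), if_neg (by omega), if_pos ht0, hyx]
      rw [addInt_formula]
      set i := (t - 0).toNat with hi
      have hij : j₀ < i := by omega
      have hlb := digSum_ge (k := k) (fun j : ℕ => x (j:ℤ)) hij (ne_zero_val hat)
      have hub := digSum_lt (k := k) (fun j : ℕ => x (j:ℤ)) i
      have hkj : (1:ℤ) ≤ (k:ℤ)^j₀ := one_le_pow₀ (by exact_mod_cast (by omega : 1 ≤ k))
      rw [Int.ediv_eq_zero_of_lt (by omega) (by omega)]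
      have e2 : ((i : ℕ) : ℤ) = t := by omega
      rw [e2]
      simp
  · rw [dif_neg h]
    push_neg at h
    rcases le_or_gt 0 t with ht0 | ht0
    · rw [if_pos ht0, if_pos ht0, hyx]
      rw [addInt_formula]
      set i := (t - 0).toNat with hi
      have hd : digSum k (fun j : ℕ => x (j:ℤ)) i = 0 := digSum_all_zero (fun j _ => h j)
      rw [hd, add_zero, neg_one_ediv_pos (by positivity), h i]
      simp
    · rw [if_neg (by omega), if_neg (by omega)]


/-! ### Lamplighter words -/

def applyW (k : ℕ) (l : List ((ℤ → ZMod k) → ℤ → ZMod k)) (x : ℤ → ZMod k) :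
    ℤ → ZMod k := l.foldr (fun f z => f z) x

lemma applyW_append (l1 l2 : List ((ℤ → ZMod k) → ℤ → ZMod k)) (x : ℤ → ZMod k) :
    applyW k (l1 ++ l2) x = applyW k l1 (applyW k l2 x) := by
  unfold applyW
  rw [List.foldr_append]

lemma applyW_cons (f : (ℤ → ZMod k) → ℤ → ZMod k) (l : List ((ℤ → ZMod k) → ℤ → ZMod k))
    (x : ℤ → ZMod k) : applyW k (f :: l) x = f (applyW k l x) := rfl

lemma lampDist_le {x y : ℤ → ZMod k} (l : List ((ℤ → ZMod k) → ℤ → ZMod k))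
    (hmem : ∀ f ∈ l, f ∈ lampGens k) (happ : applyW k l x = y) :
    lampDist k x y ≤ l.length :=
  Nat.sInf_le ⟨l, rfl, hmem, happ⟩

lemma shiftMap_mem : shiftMap k ∈ lampGens k := by simp [lampGens]
lemma shiftInvMap_mem : shiftInvMap k ∈ lampGens k := by simp [lampGens]
lemma lampMap_mem : lampMap k ∈ lampGens k := by simp [lampGens]

lemma applyW_moveL (j : ℕ) (x : ℤ → ZMod k) :
    applyW k (List.replicate j (shiftMap k)) x = sig k (j : ℤ) x := by
  induction j with
  | zero => simp [applyW, sig_zero]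
  | succ j ih =>
    rw [List.replicate_succ, applyW_cons, ih, shiftMap_eq_sig, sig_sig]
    congr 1
    push_cast
    ring

lemma applyW_moveR (j : ℕ) (x : ℤ → ZMod k) :
    applyW k (List.replicate j (shiftInvMap k)) x = sig k (-(j : ℤ)) x := by
  induction j with
  | zero => simp [applyW, sig_zero]
  | succ j ih =>
    rw [List.replicate_succ, applyW_cons, ih, shiftInvMap_eq_sig, sig_sig]
    congr 1
    push_cast
    ring

lemma applyW_lamps [NeZero k] (c : ZMod k) (x : ℤ → ZMod k) :
    applyW k (List.replicate c.val (lampMap k)) x = Function.update x 0 (x 0 + c) := by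
  have key : ∀ (v : ℕ) (x : ℤ → ZMod k),
      applyW k (List.replicate v (lampMap k)) x = Function.update x 0 (x 0 + (v : ZMod k)) := by
    intro v
    induction v with
    | zero =>
      intro x
      simp only [List.replicate, applyW, List.foldr_nil, Nat.cast_zero, add_zero]
      funext t
      rw [Function.update_apply]
      split_ifs with h
      · rw [h]
      · rfl
    | succ v ih =>
      intro x
      rw [List.replicate_succ, applyW_cons, ih]
      unfold lampMap
      rw [Function.update_idem, Function.update_self]
      congr 1
      push_cast
      ring
  rw [key c.val x, ZMod.natCast_rightInverse c]

def sweepR (k : ℕ) (v : ℕ → ZMod k) : ℕ → List ((ℤ → ZMod k) → ℤ → ZMod k)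
  | 0 => []
  | r + 1 => sweepR k (fun i => v (i + 1)) r
      ++ (shiftInvMap k :: List.replicate (v 0).val (lampMap k))

def sweepL (k : ℕ) (v : ℕ → ZMod k) : ℕ → List ((ℤ → ZMod k) → ℤ → ZMod k)
  | 0 => []
  | r + 1 => sweepL k (fun i => v (i + 1)) r
      ++ (shiftMap k :: List.replicate (v 0).val (lampMap k))

lemma sweepR_mem (v : ℕ → ZMod k) (r : ℕ) : ∀ f ∈ sweepR k v r, f ∈ lampGens k := by
  induction r generalizing v with
  | zero => simp [sweepR]
  | succ r ih =>
    intro f hf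
    rw [sweepR, List.mem_append] at hf
    rcases hf with hf | hf
    · exact ih _ f hf
    · rcases List.mem_cons.mp hf with rfl | hf
      · exact shiftInvMap_mem
      · rw [List.eq_of_mem_replicate hf]
        exact lampMap_mem

lemma sweepL_mem (v : ℕ → ZMod k) (r : ℕ) : ∀ f ∈ sweepL k v r, f ∈ lampGens k := by
  induction r generalizing v with
  | zero => simp [sweepL]
  | succ r ih =>
    intro f hf
    rw [sweepL, List.mem_append] at hf
    rcases hf with hf | hf
    · exact ih _ f hf
    · rcases List.mem_cons.mp hf with rfl | hf
      · exact shiftMap_mem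
      · rw [List.eq_of_mem_replicate hf]
        exact lampMap_mem

lemma sweepR_length [NeZero k] (v : ℕ → ZMod k) (r : ℕ) :
    (sweepR k v r).length ≤ r * k := by
  induction r generalizing v with
  | zero => simp [sweepR]
  | succ r ih =>
    rw [sweepR]
    have h1 := ih (fun i => v (i + 1))
    have h2 := ZMod.val_lt (v 0)
    simp only [List.length_append, List.length_cons, List.length_replicate]
    have hk0 : 0 < k := Nat.pos_of_ne_zero (NeZero.ne k)
    calc (sweepR k (fun i => v (i+1)) r).length + ((v 0).val + 1)
        ≤ r * k + ((v 0).val + 1) := by omega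
      _ ≤ r * k + k := by omega
      _ = (r + 1) * k := by ring

lemma sweepL_length [NeZero k] (v : ℕ → ZMod k) (r : ℕ) :
    (sweepL k v r).length ≤ r * k := by
  induction r generalizing v with
  | zero => simp [sweepL]
  | succ r ih =>
    rw [sweepL]
    have h1 := ih (fun i => v (i + 1))
    have h2 := ZMod.val_lt (v 0)
    simp only [List.length_append, List.length_cons, List.length_replicate]
    have hk0 : 0 < k := Nat.pos_of_ne_zero (NeZero.ne k)
    calc (sweepL k (fun i => v (i+1)) r).length + ((v 0).val + 1)
        ≤ r * k + ((v 0).val + 1) := by omega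
      _ ≤ r * k + k := by omega
      _ = (r + 1) * k := by ring

lemma applyW_sweepR [NeZero k] (v : ℕ → ZMod k) (r : ℕ) (y : ℤ → ZMod k) :
    applyW k (sweepR k v r) y
      = fun t => y (t + r) + (if 0 ≤ t + (r:ℤ) ∧ t < 0 then v (t + r).toNat else 0) := by
  induction r generalizing v y with
  | zero =>
    funext t
    simp only [sweepR, applyW, List.foldr_nil, Nat.cast_zero, add_zero]
    rw [if_neg (by omega), add_zero]
  | succ r ih =>
    rw [sweepR, applyW_append, applyW_cons, applyW_lamps, shiftInvMap_eq_sig, ih]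
    funext t
    simp only [sig]
    rw [Function.update_apply]
    by_cases h : t + ((r:ℕ):ℤ) - (-1) = 0
    · rw [if_pos h, if_neg (by omega), if_pos (by omega), add_zero]
      have h1 : (t + (((r:ℕ)+1:ℕ)):ℤ).toNat = 0 := by omega
      have h2 : t + ((((r:ℕ)+1:ℕ)):ℤ) = 0 := by omega
      rw [h1, h2]
    · rw [if_neg h]
      by_cases h2 : 0 ≤ t + ((r:ℕ):ℤ) ∧ t < 0
      · rw [if_pos h2, if_pos (by omega)]
        have e1 : t + ((r:ℕ):ℤ) - (-1) = t + ((((r:ℕ)+1:ℕ)):ℤ) := by push_cast; ring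
        have e2 : (t + ((r:ℕ):ℤ)).toNat + 1 = (t + ((((r:ℕ)+1:ℕ)):ℤ)).toNat := by omega
        rw [e1, e2]
      · rw [if_neg h2, if_neg (by omega), add_zero, add_zero]
        congr 1
        push_cast
        ring

lemma applyW_sweepL [NeZero k] (v : ℕ → ZMod k) (r : ℕ) (y : ℤ → ZMod k) :
    applyW k (sweepL k v r) y
      = fun t => y (t - r) + (if 1 ≤ t ∧ t ≤ (r:ℤ) then v ((r:ℤ) - t).toNat else 0) := by
  induction r generalizing v y with
  | zero =>
    funext t
    simp only [sweepL, applyW, List.foldr_nil, Nat.cast_zero, sub_zero]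
    rw [if_neg (by omega), add_zero]
  | succ r ih =>
    rw [sweepL, applyW_append, applyW_cons, applyW_lamps, shiftMap_eq_sig, ih]
    funext t
    simp only [sig]
    rw [Function.update_apply]
    by_cases h : t - ((r:ℕ):ℤ) - 1 = 0
    · rw [if_pos h, if_neg (by omega), if_pos (by omega), add_zero]
      have h1 : (((((r:ℕ)+1:ℕ)):ℤ) - t).toNat = 0 := by omega
      have h2 : t - ((((r:ℕ)+1:ℕ)):ℤ) = 0 := by omega
      rw [h1, h2]
    · rw [if_neg h]
      by_cases h2 : 1 ≤ t ∧ t ≤ ((r:ℕ):ℤ)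
      · rw [if_pos h2, if_pos (by omega)]
        have e1 : t - ((r:ℕ):ℤ) - 1 = t - ((((r:ℕ)+1:ℕ)):ℤ) := by push_cast; ring
        have e2 : (((r:ℕ):ℤ) - t).toNat + 1 = (((((r:ℕ)+1:ℕ)):ℤ) - t).toNat := by omega
        rw [e1, e2]
      · rw [if_neg h2, if_neg (by omega), add_zero, add_zero]
        congr 1
        push_cast
        ring

/-- Realizing `sig m z` (with `z = x` off a window `[-n, n+M)` and `|m| ≤ n`) by a
lamplighter word of length at most `(2n+M)(k+1)`. -/
lemma dist_bound (hk : 2 ≤ k) [NeZero k] (x z : ℤ → ZMod k) (n M : ℕ) (m : ℤ)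
    (hm1 : -(n:ℤ) ≤ m) (hm2 : m ≤ (n:ℤ))
    (hz : ∀ t : ℤ, (t < -(n:ℤ) ∨ (n:ℤ) + (M:ℤ) ≤ t) → z t = x t) :
    lampDist k x (sig k m z) ≤ (2*n + M) * (k + 1) := by
  set r := 2*n + M with hr
  rcases le_or_gt m 0 with hm | hm
  · -- sweep rightwards
    set v : ℕ → ZMod k := fun j => z ((j:ℤ) - n) - x ((j:ℤ) - n) with hv
    set L := List.replicate (n+M+m).toNat (shiftMap k) ++ sweepR k v r
        ++ List.replicate n (shiftMap k) with hL
    have hmem : ∀ f ∈ L, f ∈ lampGens k := by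
      intro f hf
      rw [hL, List.mem_append, List.mem_append] at hf
      rcases hf with (hf | hf) | hf
      · rw [List.eq_of_mem_replicate hf]; exact shiftMap_mem
      · exact sweepR_mem v r f hf
      · rw [List.eq_of_mem_replicate hf]; exact shiftMap_mem
    have hstep2 : applyW k (sweepR k v r) (sig k (n:ℤ) x) = fun t => z (t + ((n:ℤ) + M)) := by
      rw [applyW_sweepR]
      funext t
      simp only [sig]
      by_cases hc : 0 ≤ t + (r:ℤ) ∧ t < 0
      · rw [if_pos hc]
        have e1 : ((((t + (r:ℤ)).toNat : ℕ)):ℤ) - (n:ℤ) = t + ((n:ℤ) + M) := by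
          push_cast [hr] at *
          omega
        have e2 : t + (r:ℤ) - (n:ℤ) = t + ((n:ℤ) + M) := by push_cast [hr]; ring
        simp only [hv]
        rw [e1, e2]
        ring
      · rw [if_neg hc, add_zero]
        have e2 : t + (r:ℤ) - (n:ℤ) = t + ((n:ℤ) + M) := by push_cast [hr]; ring
        rw [e2, hz]
        push_cast [hr] at hc
        omega
    have happ : applyW k L x = sig k m z := by
      rw [hL, applyW_append, applyW_append, applyW_moveL, applyW_moveL, hstep2]
      funext t
      simp only [sig]
      congr 1
      omega
    have hlen : L.length ≤ (2*n + M) * (k + 1) := by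
      rw [hL]
      simp only [List.length_append, List.length_replicate]
      have h1 := sweepR_length v r
      have h2 : (n+M+m).toNat ≤ n + M := by omega
      calc (n+M+m).toNat + (sweepR k v r).length + n
          ≤ (n + M) + r * k + n := by omega
        _ = (2*n+M) * k + (2*n+M) := by rw [hr]; ring
        _ = (2*n + M) * (k+1) := by ring
    exact le_trans (lampDist_le L hmem happ) hlen
  · -- sweep leftwards; here `1 ≤ m ≤ n`
    have hn1 : 1 ≤ n := by omega
    set v : ℕ → ZMod k := fun j => z ((n:ℤ) + M - 1 - j) - x ((n:ℤ) + M - 1 - j) with hv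
    set L := List.replicate (n+1-m).toNat (shiftInvMap k) ++ sweepL k v r
        ++ List.replicate (n+M-1) (shiftInvMap k) with hL
    have hmem : ∀ f ∈ L, f ∈ lampGens k := by
      intro f hf
      rw [hL, List.mem_append, List.mem_append] at hf
      rcases hf with (hf | hf) | hf
      · rw [List.eq_of_mem_replicate hf]; exact shiftInvMap_mem
      · exact sweepL_mem v r f hf
      · rw [List.eq_of_mem_replicate hf]; exact shiftInvMap_mem
    have hcast : (((n+M-1 : ℕ)):ℤ) = (n:ℤ) + M - 1 := by omega
    have hstep2 : applyW k (sweepL k v r) (sig k (-((n+M-1:ℕ):ℤ)) x)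
        = fun t => z (t - ((n:ℤ) + 1)) := by
      rw [applyW_sweepL]
      funext t
      simp only [sig]
      by_cases hc : 1 ≤ t ∧ t ≤ (r:ℤ)
      · rw [if_pos hc]
        have e1 : (n:ℤ) + M - 1 - (((((r:ℤ) - t).toNat : ℕ)):ℤ) = t - ((n:ℤ) + 1) := by
          push_cast [hr] at *
          omega
        have e2 : t - (r:ℤ) - (-((n+M-1:ℕ):ℤ)) = t - ((n:ℤ) + 1) := by
          push_cast [hr]
          omega
        simp only [hv]
        rw [e1, e2]
        ring
      · rw [if_neg hc, add_zero]
        have e2 : t - (r:ℤ) - (-((n+M-1:ℕ):ℤ)) = t - ((n:ℤ) + 1) := by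
          push_cast [hr]
          omega
        rw [e2, hz]
        push_cast [hr] at hc
        omega
    have happ : applyW k L x = sig k m z := by
      rw [hL, applyW_append, applyW_append, applyW_moveR, applyW_moveR, hstep2]
      funext t
      simp only [sig]
      congr 1
      omega
    have hlen : L.length ≤ (2*n + M) * (k + 1) := by
      rw [hL]
      simp only [List.length_append, List.length_replicate]
      have h1 := sweepL_length v r
      have h2 : (n+1-m).toNat ≤ n := by omega
      calc (n+1-m).toNat + (sweepL k v r).length + (n+M-1)
          ≤ n + r * k + (n + M - 1) := by omega
        _ ≤ (2*n+M) * k + (2*n+M) := by rw [hr]; omega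
        _ = (2*n + M) * (k+1) := by ring
    exact le_trans (lampDist_le L hmem happ) hlen

/-- The structural invariant for words in the BS generators. -/
lemma bs_invariant (hk : 2 ≤ k) [NeZero k] (x : ℤ → ZMod k)
    (l : List ((ℤ → ZMod k) → ℤ → ZMod k)) (hl : ∀ f ∈ l, f ∈ bsGens k) :
    ∃ (m mn mx : ℤ) (o : ℕ) (b : ℤ),
      mn ≤ m ∧ m ≤ mx ∧ mn ≤ 0 ∧ 0 ≤ mx ∧ (mx - mn).toNat + o ≤ l.length ∧
      b.natAbs ≤ o * k^((mx - mn).toNat) ∧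
      applyW k l x = sig k m (addAt k b (-mx) x) := by
  induction l with
  | nil =>
    refine ⟨0, 0, 0, 0, 0, le_refl _, le_refl _, le_refl _, le_refl _, by simp, by simp, ?_⟩
    rw [addAt_zero, sig_zero]
    rfl
  | cons f l ih =>
    obtain ⟨m, mn, mx, o, b, h1, h2, h3, h4, h5, h6, h7⟩ :=
      ih (fun g hg => hl g (List.mem_cons_of_mem f hg))
    have hf := hl f (List.mem_cons_self)
    have hkn : 1 ≤ k := by omega
    rw [bsGens, Set.mem_insert_iff, Set.mem_insert_iff, Set.mem_insert_iff,
      Set.mem_singleton_iff] at hf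
    have hstep : applyW k (f :: l) x = f (sig k m (addAt k b (-mx) x)) := by
      rw [applyW_cons, h7]
    rcases hf with rfl | rfl | rfl | rfl
    · -- odoMap
      refine ⟨m, mn, mx, o + 1, b + (k:ℤ)^((mx - m).toNat), h1, h2, h3, h4, ?_, ?_, ?_⟩
      · simp only [List.length_cons]; omega
      · calc (b + (k:ℤ)^((mx - m).toNat)).natAbs ≤ b.natAbs + ((k:ℤ)^((mx-m).toNat)).natAbs :=
            Int.natAbs_add_le _ _
          _ ≤ o * k^((mx - mn).toNat) + k^((mx-m).toNat) := by
              rw [Int.natAbs_pow]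
              simp only [Int.natAbs_natCast]
              omega
          _ ≤ o * k^((mx - mn).toNat) + k^((mx-mn).toNat) := by
              have : (mx - m).toNat ≤ (mx - mn).toNat := by omega
              have := Nat.pow_le_pow_right hkn this
              omega
          _ = (o + 1) * k^((mx - mn).toNat) := by ring
      · rw [hstep, odoMap_eq_addAt hk, addAt_sig,
          addAt_rebase_pow (b := (1:ℤ)) (β := 0 - m) (s := (mx - m).toNat)]
        have e1 : 0 - m - ((mx - m).toNat : ℤ) = -mx := by omega
        have e2 : (k:ℤ)^((mx - m).toNat) * 1 = (k:ℤ)^((mx - m).toNat) := by ring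
        rw [e1, e2, addAt_add]
        congr 1
        ring
    · -- odoInvMap
      refine ⟨m, mn, mx, o + 1, b - (k:ℤ)^((mx - m).toNat), h1, h2, h3, h4, ?_, ?_, ?_⟩
      · simp only [List.length_cons]; omega
      · calc (b - (k:ℤ)^((mx - m).toNat)).natAbs
            ≤ b.natAbs + ((k:ℤ)^((mx-m).toNat)).natAbs := Int.natAbs_sub_le _ _
          _ ≤ o * k^((mx - mn).toNat) + k^((mx-m).toNat) := by
              rw [Int.natAbs_pow]
              simp only [Int.natAbs_natCast]
              omega
          _ ≤ o * k^((mx - mn).toNat) + k^((mx-mn).toNat) := by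
              have : (mx - m).toNat ≤ (mx - mn).toNat := by omega
              have := Nat.pow_le_pow_right hkn this
              omega
          _ = (o + 1) * k^((mx - mn).toNat) := by ring
      · rw [hstep, odoInvMap_eq_addAt hk, addAt_sig,
          addAt_rebase_pow (b := (-1:ℤ)) (β := 0 - m) (s := (mx - m).toNat)]
        have e1 : 0 - m - ((mx - m).toNat : ℤ) = -mx := by omega
        rw [e1, addAt_add]
        congr 1
        ring
    · -- shiftMap
      refine ⟨m + 1, mn, mx + 1, o, (k:ℤ) * b, by omega, by omega, h3, by omega, ?_, ?_, ?_⟩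
      · simp only [List.length_cons]; omega
      · have e : (mx + 1 - mn).toNat = (mx - mn).toNat + 1 := by omega
        rw [Int.natAbs_mul, e, pow_succ]
        simp only [Int.natAbs_natCast]
        calc k * b.natAbs ≤ k * (o * k^((mx - mn).toNat)) := by
              exact Nat.mul_le_mul_left k h6
          _ = o * (k^((mx-mn).toNat) * k) := by ring
      · rw [hstep, shiftMap_eq_sig, sig_sig, addAt_rebase (β := -mx)]
        have e : -mx - 1 = -(mx + 1) := by ring
        rw [e]
        congr 1
        ring
    · -- shiftInvMap
      refine ⟨m - 1, mn - 1, mx, o, b, by omega, by omega, by omega, h4, ?_, ?_, ?_⟩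
      · simp only [List.length_cons]; omega
      · have e : (mx - (mn - 1)).toNat = (mx - mn).toNat + 1 := by omega
        rw [e, pow_succ]
        calc b.natAbs ≤ o * k^((mx - mn).toNat) := h6
          _ ≤ o * (k^((mx-mn).toNat) * k) :=
              Nat.mul_le_mul_left o (Nat.le_mul_of_pos_right _ (by omega))
      · rw [hstep, shiftInvMap_eq_sig, sig_sig]
        congr 1
        ring

end BSAux

/-- For the natural actions of `BS(1,k)` and of `ℤ/kℤ ≀ ℤ` on `X = Π_ℤ ℤ/kℤ` with the
product of uniform measures: for every `g ∈ BS(1,k)` given by a word `l` in `T^±` (so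
`|g|_T ≤ l.length`, with equality for a minimal word) and every `M ≥ 0`,
`μ({x : d_{S^±}(g·x,x) ≥ (k+1)(2|g|_T + 2M + 3)}) ≤ k^{−M+1}`. -/
theorem bs_lamplighter_integrability_estimate
    (k : ℕ) (hk : 2 ≤ k) [MeasurableSpace (ZMod k)]
    (μ : Measure (ℤ → ZMod k))
    (hμ : ∀ (J : Finset ℤ) (y : ℤ → ZMod k),
      μ {x | ∀ i ∈ J, x i = y i} = ((k : ENNReal))⁻¹ ^ J.card)
    (l : List ((ℤ → ZMod k) → ℤ → ZMod k)) (hl : ∀ f ∈ l, f ∈ bsGens k)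
    (M : ℕ) :
    μ {x | (k + 1) * (2 * l.length + 2 * M + 3)
        ≤ lampDist k x (l.foldr (fun f z => f z) x)}
      ≤ (k : ENNReal) * ((k : ENNReal)⁻¹) ^ M := by
  haveI : NeZero k := ⟨by omega⟩
  rcases Nat.eq_zero_or_pos M with rfl | hM
  · -- trivial case `M = 0`: the right-hand side is at least the total mass
    have huniv : μ Set.univ = 1 := by
      have h := hμ ∅ (fun _ => 0)
      simpa using h
    have h1 : (1:ENNReal) ≤ (k:ENNReal) * ((k:ENNReal)⁻¹)^0 := by
      rw [pow_zero, mul_one]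
      exact_mod_cast (by omega : 1 ≤ k)
    exact le_trans (le_trans (measure_mono (Set.subset_univ _)) (le_of_eq huniv)) h1
  · set n := l.length with hn
    set J := Finset.Ico ((n:ℤ)) ((n:ℤ) + (M:ℤ)) with hJ
    have hlt : (2*n + M) * (k + 1) < (k + 1) * (2*n + 2*M + 3) := by nlinarith
    have hgood : ∀ x : ℤ → ZMod k, (∃ q1 ∈ J, x q1 ≠ -1) → (∃ q2 ∈ J, x q2 ≠ 0) →
        lampDist k x (l.foldr (fun f z => f z) x) ≤ (2*n + M) * (k+1) := by
      rintro x ⟨q1, hq1J, hq1⟩ ⟨q2, hq2J, hq2⟩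
      rw [hJ, Finset.mem_Ico] at hq1J hq2J
      obtain ⟨m, mn, mx, o, b, h1, h2, h3, h4, h5, h6, h7⟩ := BSAux.bs_invariant hk x l hl
      rw [← hn] at h5
      set z := BSAux.addAt k b (-mx) x with hzdef
      clear_value z
      have hmx : mx ≤ (n:ℤ) := by omega
      have hmn : -(n:ℤ) ≤ mn := by omega
      set S := (mx - mn).toNat with hS
      set τ := S + o with hτ
      have hτn : τ ≤ n := h5
      have hb : b ≤ (k:ℤ)^τ ∧ -((k:ℤ)^τ) ≤ b := by
        have habs : (b.natAbs : ℤ) ≤ (o:ℤ) * (k:ℤ)^S := by exact_mod_cast h6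
        have ho : (o : ℤ) ≤ (k:ℤ)^o := by
          exact_mod_cast le_of_lt (Nat.lt_pow_self (n := o) (by omega : 1 < k))
        have hkS : (0:ℤ) ≤ (k:ℤ)^S := by positivity
        have hcomb : (o:ℤ) * (k:ℤ)^S ≤ (k:ℤ)^τ := by
          rw [hτ, add_comm S o, pow_add]
          exact mul_le_mul_of_nonneg_right ho hkS
        have hle := Int.le_natAbs (a := b)
        have hge : -((b.natAbs : ℤ)) ≤ b := by
          rcases Int.natAbs_eq b with h | h <;> omega
        constructor <;> omega
      have hzx : ∀ t : ℤ, (t < -(n:ℤ) ∨ (n:ℤ) + (M:ℤ) ≤ t) → z t = x t := by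
        have hkey : ∀ i, (n + M + mx.toNat) ≤ i →
            BSAux.addInt k b (fun j => x (-mx + (j:ℤ))) i = x (-mx + (i:ℤ)) := by
          refine BSAux.addInt_high hk (fun j => x (-mx + (j:ℤ))) hb.2 hb.1
            ((q1 + mx).toNat) ((q2 + mx).toNat) (by omega) (by omega) ?_ (by omega)
            (by omega) ?_
          · show x (-mx + (((q1 + mx).toNat : ℕ) : ℤ)) ≠ -1
            have e : -mx + (((q1 + mx).toNat : ℕ) : ℤ) = q1 := by omega
            rw [e]
            exact hq1
          · show x (-mx + (((q2 + mx).toNat : ℕ) : ℤ)) ≠ 0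
            have e : -mx + (((q2 + mx).toNat : ℕ) : ℤ) = q2 := by omega
            rw [e]
            exact hq2
        intro t ht
        rcases ht with ht | ht
        · rw [hzdef]
          unfold BSAux.addAt
          rw [if_neg (by omega)]
        · rw [hzdef]
          unfold BSAux.addAt
          rw [if_pos (by omega : -mx ≤ t)]
          have harg : (t - -mx).toNat = (t + mx).toNat := by omega
          rw [harg, hkey (t + mx).toNat (by omega)]
          congr 1
          omega
      have hd := BSAux.dist_bound hk x z n M m (by omega) (by omega) hzx
      have hfold : l.foldr (fun f z => f z) x = BSAux.sig k m z := h7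
      rw [hfold]
      exact hd
    have hsub : {x | (k + 1) * (2 * l.length + 2 * M + 3)
          ≤ lampDist k x (l.foldr (fun f z => f z) x)}
        ⊆ {x : ℤ → ZMod k | ∀ i ∈ J, x i = (fun _ => (-1 : ZMod k)) i}
          ∪ {x : ℤ → ZMod k | ∀ i ∈ J, x i = (fun _ => (0 : ZMod k)) i} := by
      intro x hx
      by_contra hxn
      simp only [Set.mem_union, Set.mem_setOf_eq, not_or, not_forall] at hxn
      obtain ⟨⟨q1, hq1J, hq1⟩, q2, hq2J, hq2⟩ := hxn
      have h2 := hgood x ⟨q1, hq1J, hq1⟩ ⟨q2, hq2J, hq2⟩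
      exact absurd (le_trans hx h2) (not_le.mpr hlt)
    calc μ {x | (k + 1) * (2 * l.length + 2 * M + 3)
          ≤ lampDist k x (l.foldr (fun f z => f z) x)}
        ≤ μ ({x : ℤ → ZMod k | ∀ i ∈ J, x i = (fun _ => (-1 : ZMod k)) i}
            ∪ {x : ℤ → ZMod k | ∀ i ∈ J, x i = (fun _ => (0 : ZMod k)) i}) :=
          measure_mono hsub
      _ ≤ μ {x : ℤ → ZMod k | ∀ i ∈ J, x i = (fun _ => (-1 : ZMod k)) i}
            + μ {x : ℤ → ZMod k | ∀ i ∈ J, x i = (fun _ => (0 : ZMod k)) i} :=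
          measure_union_le _ _
      _ = ((k : ENNReal))⁻¹ ^ J.card + ((k : ENNReal))⁻¹ ^ J.card := by
          rw [hμ J (fun _ => (-1 : ZMod k)), hμ J (fun _ => (0 : ZMod k))]
      _ = 2 * ((k : ENNReal))⁻¹ ^ M := by
          have hc : J.card = M := by
            rw [hJ, Int.card_Ico]
            omega
          rw [hc, two_mul]
      _ ≤ (k : ENNReal) * ((k : ENNReal)⁻¹) ^ M := by
          gcongr
          exact_mod_cast hk

end
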